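/- Let loss, reg : ℝ → ℝ be convex and Lipschitz, and suppose both are coercive in the sense that loss(x) − loss(0) ≥ a_loss·|x| − b_loss and reg(x) − reg(0) ≥ a_reg·|x| − b_reg for all x ∈ ℝ, with a_loss, a_reg > 0 and b_loss, b_reg ≥ 0. Then there exist positive constants C₁ and C₂, depending only on δ, loss, reg, and the laws of Z and X, such that Lcal(v,w) ≥ C₁·(‖v‖ + ‖w‖) − C₂ for every (v,w) ∈ ℋ with Gcal(v,w) ≤ 0. -/

import Mathlib

open MeasureTheory ProbabilityTheory Real Set Filter

noncomputable section

def subderiv (f : ℝ → ℝ) (x : ℝ) : Set ℝ :=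
  {g : ℝ | ∀ y : ℝ, f x + g * (y - x) ≤ f y}

def moreau (f : ℝ → ℝ) (τ x : ℝ) : ℝ :=
  ⨅ u : ℝ, ((x - u) ^ 2 / (2 * τ) + f u)

def prox (τ : ℝ) (f : ℝ → ℝ) (x : ℝ) : ℝ :=
  Classical.epsilon fun u : ℝ =>
    ∀ y : ℝ, τ * f u + (x - u) ^ 2 / 2 ≤ τ * f y + (x - y) ^ 2 / 2

def nu (ζ : Measure ℝ) : Measure (ℝ × ℝ) :=
  (gaussianReal 0 1).prod ζ

def argminIsZero (f : ℝ → ℝ) : Prop :=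
  {x : ℝ | ∀ y : ℝ, f x ≤ f y} = {0}

def LipschitzFun (f : ℝ → ℝ) : Prop := ∃ K : NNReal, LipschitzWith K f

def Lfun (ζ : Measure ℝ) (loss : ℝ → ℝ) (c τ : ℝ) : ℝ :=
  ∫ p : ℝ × ℝ, (moreau loss τ (c * p.1 + p.2) - loss p.2) ∂(nu ζ)

def inH (ζ : Measure ℝ) (v : ℝ × ℝ → ℝ) : Prop :=
  MemLp v 2 (nu ζ)

def hnorm (ζ : Measure ℝ) (v : ℝ × ℝ → ℝ) : ℝ :=
  Real.sqrt (∫ p : ℝ × ℝ, (v p) ^ 2 ∂(nu ζ))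

/-- `R(c, τ) = E[env_reg(c·H + X; τ) − reg(X)]`. -/
def Rfun (ξ : Measure ℝ) (reg : ℝ → ℝ) (c τ : ℝ) : ℝ :=
  ∫ q : ℝ × ℝ, (moreau reg τ (c * q.1 + q.2) - reg q.2) ∂(nu ξ)

/-- Regularized potential `M(α)`. -/
def MpotR (ζ ξ : Measure ℝ) (loss reg : ℝ → ℝ) (δ α : ℝ) : ℝ :=
  if α = 0 then
    ⨆ β : Ioi (0:ℝ), ⨅ τg : Ioi (0:ℝ),
      ((β : ℝ) * (τg : ℝ) / 2 + δ * Lfun ζ loss 0 ((τg : ℝ) / (β : ℝ)))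
  else
    ⨆ bt : Ioi (0:ℝ) × Ioi (0:ℝ), ⨅ τg : Ioi (0:ℝ),
      ((bt.1 : ℝ) * (τg : ℝ) / 2 + δ * Lfun ζ loss α ((τg : ℝ) / (bt.1 : ℝ))
        - α * (bt.2 : ℝ) / 2 - α * (bt.1 : ℝ) ^ 2 / (2 * (bt.2 : ℝ))
        + Rfun ξ reg (α * (bt.1 : ℝ) / (bt.2 : ℝ)) (α / (bt.2 : ℝ)))

/-- `Lcal(v, w) = δ·E[loss(v+Z) − loss(Z)] + E[reg(w+X) − reg(X)]`. -/
def LcalR (ζ ξ : Measure ℝ) (loss reg : ℝ → ℝ) (δ : ℝ) (v w : ℝ × ℝ → ℝ) : ℝ :=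
  δ * (∫ p : ℝ × ℝ, (loss (v p + p.2) - loss p.2) ∂(nu ζ)) +
    ∫ q : ℝ × ℝ, (reg (w q + q.2) - reg q.2) ∂(nu ξ)

/-- `E[v·G]`. -/
def evG (ζ : Measure ℝ) (v : ℝ × ℝ → ℝ) : ℝ := ∫ p : ℝ × ℝ, v p * p.1 ∂(nu ζ)

/-- Projection `Π(v) = v − E[vG]·G` onto the orthogonal complement of `G`. -/
def projPerp (ζ : Measure ℝ) (v : ℝ × ℝ → ℝ) : ℝ × ℝ → ℝ :=
  fun p => v p - evG ζ v * p.1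

/-- `T(v,w) = {(‖w‖ − E[vG])₊² + E[Π(v)²]}^{1/2}`. -/
def Tfun (ζ ξ : Measure ℝ) (v w : ℝ × ℝ → ℝ) : ℝ :=
  Real.sqrt ((max (hnorm ξ w - evG ζ v) 0) ^ 2 +
    ∫ p : ℝ × ℝ, (projPerp ζ v p) ^ 2 ∂(nu ζ))

/-- `Gcal(v,w) = T(v,w) − δ^{-1/2}·E[Hw]`. -/
def GcalR (ζ ξ : Measure ℝ) (δ : ℝ) (v w : ℝ × ℝ → ℝ) : ℝ :=
  Tfun ζ ξ v w - (∫ q : ℝ × ℝ, w q * q.1 ∂(nu ξ)) / Real.sqrt δ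

/-- `(v, w)` solves `min_{(v,w) ∈ ℋ, Gcal(v,w) ≤ 0} Lcal(v,w)`. -/
def SolvesConstrainedR (ζ ξ : Measure ℝ) (loss reg : ℝ → ℝ) (δ : ℝ) (v w : ℝ × ℝ → ℝ) : Prop :=
  inH ζ v ∧ inH ξ w ∧ GcalR ζ ξ δ v w ≤ 0 ∧
    ∀ u s : ℝ × ℝ → ℝ, inH ζ u → inH ξ s → GcalR ζ ξ δ u s ≤ 0 →
      LcalR ζ ξ loss reg δ v w ≤ LcalR ζ ξ loss reg δ u s

/-- Subdifferential of a functional on the product Hilbert space `ℋ = H_Z × H_X`. -/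
def subdiffHR (ζ ξ : Measure ℝ) (F : (ℝ × ℝ → ℝ) → (ℝ × ℝ → ℝ) → ℝ) (v w : ℝ × ℝ → ℝ) :
    Set ((ℝ × ℝ → ℝ) × (ℝ × ℝ → ℝ)) :=
  {gh | inH ζ gh.1 ∧ inH ξ gh.2 ∧ ∀ u s : ℝ × ℝ → ℝ, inH ζ u → inH ξ s →
    F v w + (∫ p : ℝ × ℝ, gh.1 p * (u p - v p) ∂(nu ζ)) +
      (∫ q : ℝ × ℝ, gh.2 q * (s q - w q) ∂(nu ξ)) ≤ F u s}

/-- KKT condition at `(v, w)` with multiplier `μ`. -/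
def KKTR (ζ ξ : Measure ℝ) (loss reg : ℝ → ℝ) (δ μ : ℝ) (v w : ℝ × ℝ → ℝ) : Prop :=
  (∃ gh ∈ subdiffHR ζ ξ (GcalR ζ ξ δ) v w,
      ((fun p => -μ * gh.1 p), (fun q => -μ * gh.2 q)) ∈
        subdiffHR ζ ξ (LcalR ζ ξ loss reg δ) v w) ∧
    μ * GcalR ζ ξ δ v w = 0 ∧ GcalR ζ ξ δ v w ≤ 0

/-- The four-equation nonlinear system with unknowns `(α, β, κ, ν)`. -/
def solvesSystemR (ζ ξ : Measure ℝ) (loss reg : ℝ → ℝ) (δ α β κ ν : ℝ) : Prop :=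
  α ^ 2 = (∫ q : ℝ × ℝ, (prox ν⁻¹ reg (ν⁻¹ * β * q.1 + q.2) - q.2) ^ 2 ∂(nu ξ)) ∧
  δ⁻¹ * β ^ 2 * κ ^ 2 =
      (∫ p : ℝ × ℝ, (α * p.1 + p.2 - prox κ loss (α * p.1 + p.2)) ^ 2 ∂(nu ζ)) ∧
  δ⁻¹ * ν * α * κ =
      (∫ p : ℝ × ℝ, p.1 * (α * p.1 + p.2 - prox κ loss (α * p.1 + p.2)) ∂(nu ζ)) ∧
  κ * β = (∫ q : ℝ × ℝ, q.1 * (prox ν⁻¹ reg (ν⁻¹ * β * q.1 + q.2) - q.2) ∂(nu ξ))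

/-- Threshold `δ_perfect` for the regularized problem. -/
def deltaPerfectR (ζ ξ : Measure ℝ) (loss reg : ℝ → ℝ) : ENNReal :=
  ENNReal.ofReal (⨅ t : Ioi (0:ℝ),
      ∫ q : ℝ × ℝ, (Metric.infDist q.1 ((fun g => (t : ℝ) * g) '' subderiv reg q.2)) ^ 2 ∂(nu ξ)) /
  ENNReal.ofReal
    (1 - ⨅ t : Ioi (0:ℝ),
      ∫ p : ℝ × ℝ, (Metric.infDist p.1 ((fun g => (t : ℝ) * g) '' subderiv loss p.2)) ^ 2 ∂(nu ζ))

/-- Either `reg` is differentiable, or it has finitely many nondifferentiable points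
and `X` is unbounded. -/
def regCondition (ξ : Measure ℝ) (reg : ℝ → ℝ) : Prop :=
  (∀ x : ℝ, DifferentiableAt ℝ reg x) ∨
    ({x : ℝ | ¬ DifferentiableAt ℝ reg x}.Finite ∧ ∀ M : ℝ, 0 < M → 0 < ξ {x : ℝ | M < |x|})


section Helpers

open Topology

variable {μ : MeasureTheory.Measure (ℝ × ℝ)}

lemma my_mul_int {f g : ℝ × ℝ → ℝ} (hf : MemLp f 2 μ) (hg : MemLp g 2 μ) :
    Integrable (fun p => f p * g p) μ := by
  have hb : Integrable (fun p => f p ^ 2 + g p ^ 2) μ := hf.integrable_sq.add hg.integrable_sq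
  refine Integrable.mono' hb
    (hf.aestronglyMeasurable.mul hg.aestronglyMeasurable) (ae_of_all _ fun p => ?_)
  rw [Real.norm_eq_abs, abs_mul]
  nlinarith [sq_nonneg (|f p| - |g p|), sq_abs (f p), sq_abs (g p), abs_nonneg (f p),
    abs_nonneg (g p)]

lemma my_cs {f g : ℝ × ℝ → ℝ} (hf : MemLp f 2 μ) (hg : MemLp g 2 μ) :
    ∫ p, |f p * g p| ∂μ ≤
      Real.sqrt (∫ p, f p ^ 2 ∂μ) * Real.sqrt (∫ p, g p ^ 2 ∂μ) := by
  have h2 : Real.HolderConjugate 2 2 := Real.HolderConjugate.two_two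
  have habs : ∀ h : ℝ × ℝ → ℝ, MemLp h 2 μ → MemLp (fun p => |h p|) (ENNReal.ofReal 2) μ := by
    intro h hh
    have : (ENNReal.ofReal 2) = 2 := by norm_num
    rw [this]
    exact hh.abs
  have h := integral_mul_le_Lp_mul_Lq_of_nonneg h2
    (ae_of_all _ fun p => abs_nonneg (f p)) (ae_of_all _ fun p => abs_nonneg (g p))
    (habs f hf) (habs g hg)
  calc ∫ p, |f p * g p| ∂μ = ∫ p, |f p| * |g p| ∂μ := by
        simp_rw [abs_mul]
    _ ≤ (∫ p, |f p| ^ (2:ℝ) ∂μ) ^ (1/(2:ℝ)) * (∫ p, |g p| ^ (2:ℝ) ∂μ) ^ (1/(2:ℝ)) := h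
    _ = Real.sqrt (∫ p, f p ^ 2 ∂μ) * Real.sqrt (∫ p, g p ^ 2 ∂μ) := by
        have e : ∀ h : ℝ × ℝ → ℝ, (∫ p, |h p| ^ (2:ℝ) ∂μ) = ∫ p, h p ^ 2 ∂μ := by
          intro h
          refine integral_congr_ae (ae_of_all _ fun p => ?_)
          show |h p| ^ (2:ℝ) = h p ^ 2
          rw [show (2:ℝ) = ((2:ℕ):ℝ) by norm_num, Real.rpow_natCast, sq_abs]
        rw [e f, e g, Real.sqrt_eq_rpow, Real.sqrt_eq_rpow]

lemma my_mink {f g : ℝ × ℝ → ℝ} (hf : MemLp f 2 μ) (hg : MemLp g 2 μ) :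
    Real.sqrt (∫ p, (f p + g p) ^ 2 ∂μ) ≤
      Real.sqrt (∫ p, f p ^ 2 ∂μ) + Real.sqrt (∫ p, g p ^ 2 ∂μ) := by
  set a := Real.sqrt (∫ p, f p ^ 2 ∂μ)
  set b := Real.sqrt (∫ p, g p ^ 2 ∂μ)
  have ha : 0 ≤ a := Real.sqrt_nonneg _
  have hb : 0 ≤ b := Real.sqrt_nonneg _
  have hfa : ∫ p, f p ^ 2 ∂μ = a ^ 2 :=
    (Real.sq_sqrt (integral_nonneg fun p => sq_nonneg _)).symm
  have hgb : ∫ p, g p ^ 2 ∂μ = b ^ 2 :=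
    (Real.sq_sqrt (integral_nonneg fun p => sq_nonneg _)).symm
  have hcs : ∫ p, f p * g p ∂μ ≤ a * b := by
    calc ∫ p, f p * g p ∂μ ≤ ∫ p, |f p * g p| ∂μ :=
          integral_mono (my_mul_int hf hg) (my_mul_int hf hg).abs fun p => le_abs_self _
      _ ≤ a * b := my_cs hf hg
  have hexp : ∫ p, (f p + g p) ^ 2 ∂μ
      = ∫ p, f p ^ 2 ∂μ + 2 * ∫ p, f p * g p ∂μ + ∫ p, g p ^ 2 ∂μ := by
    have : (fun p => (f p + g p) ^ 2) = fun p => f p ^ 2 + 2 * (f p * g p) + g p ^ 2 := by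
      funext p; ring
    have h2int : Integrable (fun p => 2 * (f p * g p)) μ := (my_mul_int hf hg).const_mul 2
    have h12 : Integrable (fun p => f p ^ 2 + 2 * (f p * g p)) μ := hf.integrable_sq.add h2int
    rw [this, integral_add h12 hg.integrable_sq, integral_add hf.integrable_sq h2int,
      integral_const_mul]
  have : ∫ p, (f p + g p) ^ 2 ∂μ ≤ (a + b) ^ 2 := by
    rw [hexp, hfa, hgb]; nlinarith
  calc Real.sqrt (∫ p, (f p + g p) ^ 2 ∂μ) ≤ Real.sqrt ((a + b) ^ 2) :=
        Real.sqrt_le_sqrt this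
    _ = a + b := Real.sqrt_sq (by linarith)

lemma my_trunc [IsProbabilityMeasure μ] {u : ℝ × ℝ → ℝ} (hu : MemLp u 2 μ)
    (hfst : MemLp (fun p : ℝ × ℝ => p.1) 2 μ) {M : ℝ} (hM : 0 ≤ M) :
    ∫ p, u p * p.1 ∂μ ≤ M * ∫ p, |u p| ∂μ +
      Real.sqrt (∫ p, u p ^ 2 ∂μ) *
        Real.sqrt (∫ p, ({q : ℝ × ℝ | M < |q.1|}.indicator (fun q => q.1 ^ 2) p) ∂μ) := by
  set S : Set (ℝ × ℝ) := {q : ℝ × ℝ | M < |q.1|} with hS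
  have hSm : MeasurableSet S := measurableSet_lt measurable_const measurable_fst.abs
  set g : ℝ × ℝ → ℝ := S.indicator (fun q => q.1) with hg
  have hgm : MemLp g 2 μ := hfst.indicator hSm
  have hgsq : ∀ p, g p ^ 2 = S.indicator (fun q => q.1 ^ 2) p := by
    intro p
    by_cases h : p ∈ S <;> simp [hg, Set.indicator_of_mem, Set.indicator_of_notMem, h]
  have hpt : ∀ p, u p * p.1 ≤ M * |u p| + |u p * g p| := by
    intro p
    by_cases h : p ∈ S
    · have : g p = p.1 := Set.indicator_of_mem h _
      rw [this]
      have h1 : u p * p.1 ≤ |u p * p.1| := le_abs_self _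
      have h2 : 0 ≤ M * |u p| := mul_nonneg hM (abs_nonneg _)
      linarith
    · have hgp : g p = 0 := Set.indicator_of_notMem h _
      have hle : |p.1| ≤ M := le_of_not_gt h
      have : u p * p.1 ≤ |u p| * |p.1| := by
        calc u p * p.1 ≤ |u p * p.1| := le_abs_self _
          _ = |u p| * |p.1| := abs_mul _ _
      have h2 : |u p| * |p.1| ≤ M * |u p| := by
        rw [mul_comm M]
        exact mul_le_mul_of_nonneg_left hle (abs_nonneg _)
      rw [hgp]
      simp only [mul_zero, abs_zero, add_zero]
      linarith
  have hui : Integrable u μ := hu.integrable one_le_two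
  have h1 : Integrable (fun p => u p * p.1) μ := my_mul_int hu hfst
  have h2 : Integrable (fun p => M * |u p| + |u p * g p|) μ :=
    (hui.abs.const_mul M).add (my_mul_int hu hgm).abs
  calc ∫ p, u p * p.1 ∂μ ≤ ∫ p, (M * |u p| + |u p * g p|) ∂μ :=
        integral_mono h1 h2 hpt
    _ = M * ∫ p, |u p| ∂μ + ∫ p, |u p * g p| ∂μ := by
        rw [integral_add (hui.abs.const_mul M) (my_mul_int hu hgm).abs, integral_const_mul]
    _ ≤ M * ∫ p, |u p| ∂μ + Real.sqrt (∫ p, u p ^ 2 ∂μ) * Real.sqrt (∫ p, g p ^ 2 ∂μ) := by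
        have := my_cs hu hgm
        linarith
    _ = _ := by
        rw [integral_congr_ae (ae_of_all _ fun p => hgsq p)]

lemma my_tail_snd (μ : Measure (ℝ × ℝ)) [IsProbabilityMeasure μ] {ε : ℝ} (hε : 0 < ε) :
    ∃ T : ℝ, 0 ≤ T ∧ (μ {p : ℝ × ℝ | T < |p.2|}).toReal ≤ ε := by
  set S : ℕ → Set (ℝ × ℝ) := fun n => {p : ℝ × ℝ | (n : ℝ) < |p.2|} with hSdef
  have hSm : ∀ n, MeasurableSet (S n) := fun n =>
    measurableSet_lt measurable_const measurable_snd.abs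
  have hanti : Antitone S := by
    intro n m hnm p hp
    simp only [hSdef, Set.mem_setOf_eq] at *
    exact lt_of_le_of_lt (by exact_mod_cast Nat.cast_le.2 hnm) hp
  have hempty : ⋂ n, S n = ∅ := by
    ext p
    simp only [Set.mem_iInter, Set.mem_setOf_eq, Set.mem_empty_iff_false, iff_false, not_forall,
      not_lt, hSdef]
    obtain ⟨n, hn⟩ := exists_nat_gt |p.2|
    exact ⟨n, hn.le⟩
  have htend : Tendsto (μ ∘ S) atTop (𝓝 0) := by
    have := tendsto_measure_iInter_atTop (μ := μ)
      (fun n => (hSm n).nullMeasurableSet) hanti ⟨0, measure_ne_top μ _⟩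
    rwa [hempty, measure_empty] at this
  rw [ENNReal.tendsto_atTop_zero] at htend
  obtain ⟨N, hN⟩ := htend (ENNReal.ofReal ε) (by simp [hε])
  refine ⟨(N : ℝ), Nat.cast_nonneg N, ?_⟩
  exact ENNReal.toReal_le_of_le_ofReal hε.le (hN N le_rfl)

lemma my_tail_fst (μ : Measure (ℝ × ℝ)) [IsProbabilityMeasure μ]
    (hfst : MemLp (fun p : ℝ × ℝ => p.1) 2 μ) {ε : ℝ} (hε : 0 < ε) :
    ∃ M : ℝ, 0 ≤ M ∧
      ∫ p, ({q : ℝ × ℝ | M < |q.1|}.indicator (fun q => q.1 ^ 2) p) ∂μ ≤ ε := by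
  set F : ℕ → ℝ × ℝ → ℝ := fun n => {q : ℝ × ℝ | (n : ℝ) < |q.1|}.indicator (fun q => q.1 ^ 2)
    with hFdef
  have hSm : ∀ n : ℕ, MeasurableSet {q : ℝ × ℝ | (n : ℝ) < |q.1|} := fun n =>
    measurableSet_lt measurable_const measurable_fst.abs
  have htend : Tendsto (fun n => ∫ p, F n p ∂μ) atTop (𝓝 (∫ _p, (0:ℝ) ∂μ)) := by
    refine tendsto_integral_of_dominated_convergence (fun p => p.1 ^ 2)
      (fun n => ((measurable_fst.pow_const 2).indicator (hSm n)).aestronglyMeasurable)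
      hfst.integrable_sq (fun n => ae_of_all _ fun p => ?_) (ae_of_all _ fun p => ?_)
    · rw [Real.norm_eq_abs]
      show |({q : ℝ × ℝ | (n : ℝ) < |q.1|}.indicator (fun q => q.1 ^ 2)) p| ≤ p.1 ^ 2
      by_cases h : p ∈ {q : ℝ × ℝ | (n : ℝ) < |q.1|}
      · rw [Set.indicator_of_mem h, abs_of_nonneg (sq_nonneg _)]
      · rw [Set.indicator_of_notMem h]; simp [sq_nonneg]
    · have : ∀ᶠ n : ℕ in atTop, F n p = 0 := by
        obtain ⟨n₀, hn₀⟩ := exists_nat_gt |p.1|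
        refine eventually_atTop.2 ⟨n₀, fun m hm => ?_⟩
        apply Set.indicator_of_notMem
        simp only [Set.mem_setOf_eq, not_lt]
        calc |p.1| ≤ (n₀ : ℝ) := hn₀.le
          _ ≤ (m : ℝ) := by exact_mod_cast hm
      exact tendsto_const_nhds.congr' (this.mono fun n hn => hn.symm)
  rw [integral_zero] at htend
  obtain ⟨n, hn⟩ := (htend.eventually_lt_const hε).exists
  exact ⟨(n : ℝ), Nat.cast_nonneg n, hn.le⟩

lemma my_gauss_sq : Integrable (fun x : ℝ => x ^ 2) (gaussianReal 0 1) := by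
  rw [gaussianReal_of_var_ne_zero 0 one_ne_zero]
  rw [integrable_withDensity_iff (measurable_gaussianPDF 0 1)
    (ae_of_all _ fun x => ENNReal.ofReal_lt_top)]
  have base : Integrable (fun x : ℝ => x ^ (2:ℝ) * Real.exp (-(1/2) * x ^ 2)) :=
    integrable_rpow_mul_exp_neg_mul_sq (by norm_num) (by norm_num)
  refine (base.const_mul ((Real.sqrt (2 * π))⁻¹)).congr (ae_of_all _ fun x => ?_)
  show (Real.sqrt (2 * π))⁻¹ * (x ^ (2:ℝ) * Real.exp (-(1/2) * x ^ 2))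
      = x ^ 2 * (gaussianPDF 0 1 x).toReal
  rw [show (2:ℝ) = ((2:ℕ):ℝ) by norm_num, Real.rpow_natCast]
  rw [gaussianPDF_def, ENNReal.toReal_ofReal (gaussianPDFReal_nonneg 0 1 x)]
  rw [gaussianPDFReal]
  push_cast
  rw [mul_one]
  ring_nf

lemma my_fst_memL2 (ζ : Measure ℝ) [IsProbabilityMeasure ζ] :
    MemLp (fun p : ℝ × ℝ => p.1) 2 ((gaussianReal 0 1).prod ζ) := by
  have h1 : MemLp (id : ℝ → ℝ) 2 (gaussianReal 0 1) :=
    (memLp_two_iff_integrable_sq aestronglyMeasurable_id).2 (by simpa using my_gauss_sq)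
  have hmap : Measure.map (Prod.fst : ℝ × ℝ → ℝ) ((gaussianReal 0 1).prod ζ)
      = gaussianReal 0 1 := by
    conv_rhs => rw [← Measure.fst_prod (μ := gaussianReal 0 1) (ν := ζ)]
    rw [Measure.fst]
  exact h1.comp_measurePreserving ⟨measurable_fst, hmap⟩

lemma my_lossLB (μ : Measure (ℝ × ℝ)) [IsProbabilityMeasure μ] (f : ℝ → ℝ) {Kf : NNReal}
    (hlip : LipschitzWith Kf f) {a b : ℝ} (ha : 0 < a) (hb : 0 ≤ b)
    (hco : ∀ x : ℝ, a * |x| - b ≤ f x - f 0) {ε : ℝ} (hε : 0 < ε) :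
    ∃ C : ℝ, 0 ≤ C ∧ ∀ v : ℝ × ℝ → ℝ, MemLp v 2 μ →
      a * (∫ p, |v p| ∂μ) - (a + (Kf : ℝ)) * ε * Real.sqrt (∫ p, v p ^ 2 ∂μ) - C
        ≤ ∫ p, (f (v p + p.2) - f p.2) ∂μ := by
  set K : ℝ := (Kf : ℝ) with hKdef
  have hK0 : 0 ≤ K := Kf.coe_nonneg
  have hK : ∀ x y : ℝ, |f x - f y| ≤ K * |x - y| := by
    intro x y
    have := hlip.dist_le_mul x y
    rwa [Real.dist_eq, Real.dist_eq] at this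
  obtain ⟨T, hT0, hTtail⟩ := my_tail_snd μ (mul_pos hε hε)
  set B : Set (ℝ × ℝ) := {p : ℝ × ℝ | T < |p.2|} with hBdef
  have hBm : MeasurableSet B := measurableSet_lt measurable_const measurable_snd.abs
  refine ⟨b + (a + K) * T, by positivity, fun v hv => ?_⟩
  set C : ℝ := b + (a + K) * T with hCdef
  have hC0 : 0 ≤ C := by positivity
  have hvi : Integrable v μ := hv.integrable one_le_two
  set φ : ℝ × ℝ → ℝ := fun p => f (v p + p.2) - f p.2 with hφdef
  have hφb : ∀ p, |φ p| ≤ K * |v p| := by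
    intro p
    have := hK (v p + p.2) p.2
    simpa using this
  have hφm : AEStronglyMeasurable φ μ := by
    apply AEStronglyMeasurable.sub
    · exact hlip.continuous.comp_aestronglyMeasurable
        (hv.aestronglyMeasurable.add measurable_snd.aestronglyMeasurable)
    · exact hlip.continuous.comp_aestronglyMeasurable measurable_snd.aestronglyMeasurable
  have hφi : Integrable φ μ := by
    refine Integrable.mono' (hvi.abs.const_mul K) hφm (ae_of_all _ fun p => ?_)
    rw [Real.norm_eq_abs]; exact hφb p
  -- the lower bound function
  set ψ : ℝ × ℝ → ℝ := fun p =>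
    B.indicator (fun p => -(K * |v p|)) p + Bᶜ.indicator (fun p => a * |v p| - C) p with hψdef
  have hi1 : Integrable (fun p => B.indicator (fun p => -(K * |v p|)) p) μ :=
    ((hvi.abs.const_mul K).neg.indicator hBm)
  have hi2 : Integrable (fun p => Bᶜ.indicator (fun p => a * |v p| - C) p) μ :=
    (((hvi.abs.const_mul a).sub (integrable_const C)).indicator hBm.compl)
  have hψi : Integrable ψ μ := hi1.add hi2
  have hle : ∀ p, ψ p ≤ φ p := by
    intro p
    by_cases h : p ∈ B
    · have h1 : ψ p = -(K * |v p|) := by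
        rw [hψdef]
        simp only [Set.indicator_of_mem h, Set.indicator_of_notMem (Set.notMem_compl_iff.2 h)]
        ring
      rw [h1]
      have := hφb p
      have := abs_le.1 this
      linarith [(abs_le.1 (hφb p)).1]
    · have h1 : ψ p = a * |v p| - C := by
        rw [hψdef]
        simp only [Set.indicator_of_notMem h, Set.indicator_of_mem (Set.mem_compl h)]
        ring
      rw [h1]
      have hzT : |p.2| ≤ T := le_of_not_gt h
      have h2 : f p.2 - f 0 ≤ K * |p.2| := by
        have := (abs_le.1 (hK p.2 0)).2
        simpa using this
      have h3 : a * |v p + p.2| - b ≤ f (v p + p.2) - f 0 := hco _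
      have h4 : |v p| - |p.2| ≤ |v p + p.2| := by
        have := abs_add_le (v p + p.2) (-p.2)
        simp at this
        calc |v p| - |p.2| ≤ |v p + p.2| + |p.2| - |p.2| := by
              have : |v p| = |v p + p.2 + -p.2| := by ring_nf
              rw [this]
              have := abs_add_le (v p + p.2) (-p.2)
              simp only [abs_neg] at this
              linarith
          _ = |v p + p.2| := by ring
      have hKz : K * |p.2| ≤ K * T := mul_le_mul_of_nonneg_left hzT hK0
      have haz : a * |p.2| ≤ a * T := mul_le_mul_of_nonneg_left hzT ha.le
      show a * |v p| - C ≤ φ p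
      rw [hφdef, hCdef]
      simp only
      nlinarith [abs_nonneg (v p), abs_nonneg p.2]
  have hmono : ∫ p, ψ p ∂μ ≤ ∫ p, φ p ∂μ := integral_mono hψi hφi hle
  -- compute/bound ∫ψ
  have hsplit : ∫ p, ψ p ∂μ
      = (∫ p in B, -(K * |v p|) ∂μ) + ∫ p in Bᶜ, (a * |v p| - C) ∂μ := by
    rw [hψdef, integral_add hi1 hi2, integral_indicator hBm, integral_indicator hBm.compl]
  have hInt1 : ∫ p in B, -(K * |v p|) ∂μ = -(K * ∫ p in B, |v p| ∂μ) := by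
    rw [integral_neg, integral_const_mul]
  have hInt2 : ∫ p in Bᶜ, (a * |v p| - C) ∂μ
      = a * (∫ p in Bᶜ, |v p| ∂μ) - C * (μ Bᶜ).toReal := by
    rw [integral_sub ((hvi.abs.const_mul a).restrict) (integrable_const C),
      integral_const_mul, setIntegral_const, smul_eq_mul]
    rw [measureReal_def]
    ring
  have hcompl : (∫ p in B, |v p| ∂μ) + ∫ p in Bᶜ, |v p| ∂μ = ∫ p, |v p| ∂μ :=
    integral_add_compl hBm hvi.abs
  have hmuB : C * (μ Bᶜ).toReal ≤ C := by
    have h1 : (μ Bᶜ).toReal ≤ 1 := by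
      have := prob_le_one (μ := μ) (s := Bᶜ)
      exact ENNReal.toReal_le_of_le_ofReal zero_le_one (by simpa using this)
    nlinarith
  -- Cauchy-Schwarz bound on ∫_B |v|
  have hCSB : ∫ p in B, |v p| ∂μ ≤ ε * Real.sqrt (∫ p, v p ^ 2 ∂μ) := by
    set ind : ℝ × ℝ → ℝ := B.indicator (fun _ => (1:ℝ)) with hind
    have hindm : MemLp ind 2 μ := memLp_indicator_const 2 hBm 1 (Or.inr (measure_ne_top μ B))
    have heq : ∫ p in B, |v p| ∂μ = ∫ p, |v p * ind p| ∂μ := by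
      rw [← integral_indicator hBm]
      refine integral_congr_ae (ae_of_all _ fun p => ?_)
      by_cases h : p ∈ B
      · simp [hind, Set.indicator_of_mem h, abs_mul]
      · simp [hind, Set.indicator_of_notMem h]
    have hindsq : ∫ p, ind p ^ 2 ∂μ = (μ B).toReal := by
      have : ∀ p, ind p ^ 2 = B.indicator (fun _ => (1:ℝ)) p := by
        intro p
        by_cases h : p ∈ B <;>
          simp [hind, Set.indicator_of_mem, Set.indicator_of_notMem, h]
      rw [integral_congr_ae (ae_of_all _ this), integral_indicator_const _ hBm]
      simp
      rfl
    have hcs := my_cs hv hindm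
    rw [hindsq] at hcs
    have hsq : Real.sqrt ((μ B).toReal) ≤ ε := by
      have : (μ B).toReal ≤ ε * ε := hTtail
      calc Real.sqrt ((μ B).toReal) ≤ Real.sqrt (ε * ε) := Real.sqrt_le_sqrt this
        _ = ε := Real.sqrt_mul_self hε.le
    calc ∫ p in B, |v p| ∂μ = ∫ p, |v p * ind p| ∂μ := heq
      _ ≤ Real.sqrt (∫ p, v p ^ 2 ∂μ) * Real.sqrt ((μ B).toReal) := hcs
      _ ≤ Real.sqrt (∫ p, v p ^ 2 ∂μ) * ε :=
          mul_le_mul_of_nonneg_left hsq (Real.sqrt_nonneg _)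
      _ = ε * Real.sqrt (∫ p, v p ^ 2 ∂μ) := mul_comm _ _
  have hBnn : 0 ≤ ∫ p in B, |v p| ∂μ := integral_nonneg fun p => abs_nonneg _
  have key : a * (∫ p, |v p| ∂μ) - (a + K) * (∫ p in B, |v p| ∂μ) - C ≤ ∫ p, ψ p ∂μ := by
    rw [hsplit, hInt1, hInt2]
    have : ∫ p in Bᶜ, |v p| ∂μ = ∫ p, |v p| ∂μ - ∫ p in B, |v p| ∂μ := by linarith
    rw [this]
    nlinarith
  have hfinal : (a + K) * (∫ p in B, |v p| ∂μ)
      ≤ (a + K) * ε * Real.sqrt (∫ p, v p ^ 2 ∂μ) := by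
    rw [mul_assoc]
    exact mul_le_mul_of_nonneg_left hCSB (by positivity)
  linarith

end Helpers

/-- coercivity of `Lcal` on the constraint set `{Gcal(v,w) ≤ 0}` when `loss` and
`reg` are coercive. -/
theorem stmt19 (ζ ξ : Measure ℝ) [IsProbabilityMeasure ζ] [IsProbabilityMeasure ξ]
    (loss reg : ℝ → ℝ) (δ : ℝ) (hδ : 0 < δ)
    (hconvL : ConvexOn ℝ Set.univ loss) (hlipL : LipschitzFun loss)
    (hconvR : ConvexOn ℝ Set.univ reg) (hlipR : LipschitzFun reg)
    (aLoss bLoss aReg bReg : ℝ)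
    (haL : 0 < aLoss) (hbL : 0 ≤ bLoss) (haR : 0 < aReg) (hbR : 0 ≤ bReg)
    (hcoL : ∀ x : ℝ, aLoss * |x| - bLoss ≤ loss x - loss 0)
    (hcoR : ∀ x : ℝ, aReg * |x| - bReg ≤ reg x - reg 0) :
    ∃ C₁ C₂ : ℝ, 0 < C₁ ∧ 0 < C₂ ∧
      ∀ v w : ℝ × ℝ → ℝ, inH ζ v → inH ξ w → GcalR ζ ξ δ v w ≤ 0 →
        C₁ * (hnorm ζ v + hnorm ξ w) - C₂ ≤ LcalR ζ ξ loss reg δ v w := by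
  obtain ⟨KL, hKL⟩ := hlipL
  obtain ⟨KR, hKR⟩ := hlipR
  haveI h₁ : IsProbabilityMeasure (nu ζ) :=
    inferInstanceAs (IsProbabilityMeasure ((gaussianReal 0 1).prod ζ))
  haveI h₂ : IsProbabilityMeasure (nu ξ) :=
    inferInstanceAs (IsProbabilityMeasure ((gaussianReal 0 1).prod ξ))
  have hfst₁ : MemLp (fun p : ℝ × ℝ => p.1) 2 (nu ζ) := my_fst_memL2 ζ
  have hfst₂ : MemLp (fun p : ℝ × ℝ => p.1) 2 (nu ξ) := my_fst_memL2 ξ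
  set γ₁ : ℝ := ∫ p : ℝ × ℝ, p.1 ^ 2 ∂(nu ζ) with hγ₁
  set G₁ : ℝ := Real.sqrt γ₁ with hG₁def
  have hG₁0 : 0 ≤ G₁ := Real.sqrt_nonneg _
  set s : ℝ := Real.sqrt δ with hs
  have hs0 : 0 < s := Real.sqrt_pos.2 hδ
  have he₁ : (0:ℝ) < (1 / (4 * (G₁ + 1))) ^ 2 := by positivity
  obtain ⟨M₁, hM₁0, hM₁⟩ := my_tail_fst (nu ζ) hfst₁ he₁
  have he₂ : (0:ℝ) < (s / 4) ^ 2 := by positivity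
  obtain ⟨M₂, hM₂0, hM₂⟩ := my_tail_fst (nu ξ) hfst₂ he₂
  set t₁ : ℝ :=
    Real.sqrt (∫ p, ({q : ℝ × ℝ | M₁ < |q.1|}.indicator (fun q => q.1 ^ 2) p) ∂(nu ζ)) with ht₁d
  set t₂ : ℝ :=
    Real.sqrt (∫ p, ({q : ℝ × ℝ | M₂ < |q.1|}.indicator (fun q => q.1 ^ 2) p) ∂(nu ξ)) with ht₂d
  have ht₁0 : 0 ≤ t₁ := Real.sqrt_nonneg _
  have ht₂0 : 0 ≤ t₂ := Real.sqrt_nonneg _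
  have ht₁ : t₁ ≤ 1 / (4 * (G₁ + 1)) := by
    calc t₁ ≤ Real.sqrt ((1 / (4 * (G₁ + 1))) ^ 2) := Real.sqrt_le_sqrt hM₁
      _ = 1 / (4 * (G₁ + 1)) := Real.sqrt_sq (by positivity)
  have ht₂ : t₂ ≤ s / 4 := by
    calc t₂ ≤ Real.sqrt ((s / 4) ^ 2) := Real.sqrt_le_sqrt hM₂
      _ = s / 4 := Real.sqrt_sq (by positivity)
  set Q : ℝ := M₂ / s with hQd
  have hQ0 : 0 ≤ Q := by positivity
  have hQeq : Q * s = M₂ := div_mul_cancel₀ M₂ hs0.ne'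
  set A : ℝ := 2 * M₁ * (1 + G₁) + 4 * Q + 1 with hA
  have hAp1 : (0:ℝ) ≤ 2 * M₁ * (1 + G₁) := by positivity
  have hA1 : 1 ≤ A := by rw [hA]; linarith
  have hA0 : 0 < A := by linarith
  set c₀ : ℝ := min (δ * aLoss) aReg with hc₀
  have hc₀0 : 0 < c₀ := lt_min (mul_pos hδ haL) haR
  set DL : ℝ := δ * (aLoss + (KL:ℝ)) + 1 with hDL
  have hDL0 : 0 < DL := by positivity
  set DR : ℝ := aReg + (KR:ℝ) + 1 with hDR
  have hDR0 : 0 < DR := by positivity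
  set εL : ℝ := c₀ / (4 * A) / DL with hεLd
  have hεL0 : 0 < εL := by positivity
  set εR : ℝ := c₀ / (4 * A) / DR with hεRd
  have hεR0 : 0 < εR := by positivity
  obtain ⟨CL, hCL0, HL⟩ := my_lossLB (nu ζ) loss hKL haL hbL hcoL hεL0
  obtain ⟨CR, hCR0, HR⟩ := my_lossLB (nu ξ) reg hKR haR hbR hcoR hεR0
  refine ⟨c₀ / (2 * A), δ * CL + CR + 1, by positivity, by positivity, fun v w hv hw hG => ?_⟩
  have hv' : MemLp v 2 (nu ζ) := hv
  have hw' : MemLp w 2 (nu ξ) := hw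
  set Nv : ℝ := hnorm ζ v with hNvd
  set Nw : ℝ := hnorm ξ w with hNwd
  have hNv : Real.sqrt (∫ p, v p ^ 2 ∂(nu ζ)) = Nv := rfl
  have hNw : Real.sqrt (∫ q, w q ^ 2 ∂(nu ξ)) = Nw := rfl
  have hNv0 : 0 ≤ Nv := Real.sqrt_nonneg _
  have hNw0 : 0 ≤ Nw := Real.sqrt_nonneg _
  set Ev : ℝ := ∫ p, |v p| ∂(nu ζ) with hEvd
  set Ew : ℝ := ∫ q, |w q| ∂(nu ξ) with hEwd
  have hEv0 : 0 ≤ Ev := integral_nonneg fun p => abs_nonneg _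
  have hEw0 : 0 ≤ Ew := integral_nonneg fun p => abs_nonneg _
  set c : ℝ := evG ζ v with hcd
  set Iw : ℝ := ∫ q : ℝ × ℝ, w q * q.1 ∂(nu ξ) with hIwd
  set Tf : ℝ := Tfun ζ ξ v w with hTfd
  set P : ℝ := Real.sqrt (∫ p, (projPerp ζ v p) ^ 2 ∂(nu ζ)) with hPd
  -- truncation bounds
  have htc : c ≤ M₁ * Ev + Nv * t₁ := by
    have h := my_trunc hv' hfst₁ hM₁0
    rw [hNv] at h
    exact h
  have htc2 : -c ≤ M₁ * Ev + Nv * t₁ := by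
    have h := my_trunc (hv'.neg) hfst₁ hM₁0
    simp only [Pi.neg_apply, neg_mul, abs_neg, neg_sq] at h
    rw [integral_neg, hNv] at h
    rw [hcd]
    exact h
  have habsc : |c| ≤ M₁ * Ev + Nv * t₁ := abs_le.2 ⟨by linarith, htc⟩
  have hIwb : Iw ≤ M₂ * Ew + Nw * t₂ := by
    have h := my_trunc hw' hfst₂ hM₂0
    rw [hNw] at h
    exact h
  -- constraint consequences
  have hT : Tf ≤ Iw / s := by
    have : Tf - Iw / s ≤ 0 := hG
    linarith
  have hT0 : 0 ≤ Tf := Real.sqrt_nonneg _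
  have hTs : Tf * s ≤ Iw := (le_div_iff₀ hs0).1 hT
  have hPT : P ≤ Tf := by
    rw [hPd, hTfd]
    exact Real.sqrt_le_sqrt (le_add_of_nonneg_left (sq_nonneg _))
  have hNwc : Nw - c ≤ Tf := by
    calc Nw - c ≤ max (Nw - c) 0 := le_max_left _ _
      _ = Real.sqrt ((max (Nw - c) 0) ^ 2) := (Real.sqrt_sq (le_max_right _ _)).symm
      _ ≤ Tf := Real.sqrt_le_sqrt
          (le_add_of_nonneg_right (integral_nonneg fun p => sq_nonneg _))
  have hPerpm : MemLp (projPerp ζ v) 2 (nu ζ) := hv'.sub (hfst₁.const_mul (evG ζ v))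
  have hNvP : Nv ≤ P + |c| * G₁ := by
    have hfun : (fun p : ℝ × ℝ => v p ^ 2)
        = fun p => (projPerp ζ v p + evG ζ v * p.1) ^ 2 := by
      funext p
      simp only [projPerp]
      ring
    have hmk := my_mink hPerpm (hfst₁.const_mul (evG ζ v))
    have hsec : ∫ p : ℝ × ℝ, (evG ζ v * p.1) ^ 2 ∂(nu ζ) = (evG ζ v) ^ 2 * γ₁ := by
      simp_rw [mul_pow]
      rw [integral_const_mul]
    rw [hsec] at hmk
    have hsq : Real.sqrt ((evG ζ v) ^ 2 * γ₁) = |evG ζ v| * G₁ := by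
      rw [Real.sqrt_mul (sq_nonneg _), Real.sqrt_sq_eq_abs]
    rw [hsq] at hmk
    calc Nv = Real.sqrt (∫ p, v p ^ 2 ∂(nu ζ)) := rfl
      _ = Real.sqrt (∫ p, (projPerp ζ v p + evG ζ v * p.1) ^ 2 ∂(nu ζ)) := by rw [hfun]
      _ ≤ P + |evG ζ v| * G₁ := hmk
      _ = P + |c| * G₁ := rfl
  -- loss lower bounds (extract before making variables opaque)
  have hLv := HL v hv'
  rw [hNv, ← hEvd] at hLv
  have hRw := HR w hw'
  rw [hNw, ← hEwd] at hRw
  set IL : ℝ := ∫ p, (loss (v p + p.2) - loss p.2) ∂(nu ζ) with hILd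
  set IR : ℝ := ∫ q, (reg (w q + q.2) - reg q.2) ∂(nu ξ) with hIRd
  have hLcal : LcalR ζ ξ loss reg δ v w = δ * IL + IR := rfl
  rw [hLcal]
  clear_value γ₁ G₁ s t₁ t₂ Q A c₀ DL DR εL εR Nv Nw Ev Ew c Iw Tf P IL IR
  clear hγ₁ ht₁d ht₂d hM₁ hM₂ he₁ he₂ hNvd hNwd hNv hNw hEvd hEwd hcd hIwd hTfd hPd
  clear hILd hIRd hLcal HL HR hv hw hv' hw' hG hfst₁ hfst₂ hKL hKR hcoL hcoR hconvL hconvR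
  clear hPerpm hT hG₁def hs
  clear loss reg v w
  have hAne : A ≠ 0 := hA0.ne'
  -- arithmetic: Nv + Nw ≤ A * (Ev + Ew)
  have hden : (0:ℝ) < 4 * (G₁ + 1) := by linarith
  have ht₁4 : t₁ ≤ 1 / 4 := ht₁.trans (by
    rw [div_le_div_iff₀ hden (by norm_num)]
    linarith)
  have ht₁G : t₁ * G₁ ≤ 1 / 4 := by
    calc t₁ * G₁ ≤ (1 / (4 * (G₁ + 1))) * G₁ := mul_le_mul_of_nonneg_right ht₁ hG₁0
      _ ≤ 1 / 4 := by
          rw [div_mul_eq_mul_div, one_mul, div_le_div_iff₀ hden (by norm_num)]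
          linarith
  have hTf2 : Tf ≤ Q * Ew + Nw / 4 := by
    have h1 : Tf * s ≤ (Q * Ew + Nw / 4) * s := by
      have h2 : Nw * t₂ ≤ Nw * (s / 4) := mul_le_mul_of_nonneg_left ht₂ hNw0
      calc Tf * s ≤ Iw := hTs
        _ ≤ M₂ * Ew + Nw * t₂ := hIwb
        _ ≤ M₂ * Ew + Nw * (s / 4) := by linarith
        _ = (Q * Ew + Nw / 4) * s := by rw [← hQeq]; ring
    exact le_of_mul_le_mul_right h1 hs0
  have hNvb : Nv ≤ Q * Ew + Nw / 4 + M₁ * G₁ * Ev + Nv / 4 := by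
    have h1 : |c| * G₁ ≤ M₁ * G₁ * Ev + Nv / 4 := by
      have h0 : |c| * G₁ ≤ (M₁ * Ev + Nv * t₁) * G₁ := mul_le_mul_of_nonneg_right habsc hG₁0
      have h2 : Nv * t₁ * G₁ ≤ Nv * (1/4) := by
        rw [mul_assoc]
        exact mul_le_mul_of_nonneg_left ht₁G hNv0
      linarith only [h0, h2]
    calc Nv ≤ P + |c| * G₁ := hNvP
      _ ≤ Tf + (M₁ * G₁ * Ev + Nv / 4) := by linarith
      _ ≤ Q * Ew + Nw / 4 + M₁ * G₁ * Ev + Nv / 4 := by linarith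
  have hNwb : Nw ≤ M₁ * Ev + Nv / 4 + Q * Ew + Nw / 4 := by
    have h1 : c ≤ M₁ * Ev + Nv / 4 := by
      have h2 : Nv * t₁ ≤ Nv * (1/4) := mul_le_mul_of_nonneg_left ht₁4 hNv0
      linarith
    calc Nw ≤ c + Tf := by linarith
      _ ≤ M₁ * Ev + Nv / 4 + (Q * Ew + Nw / 4) := by linarith
      _ = M₁ * Ev + Nv / 4 + Q * Ew + Nw / 4 := by ring
  have hsum : Nv + Nw ≤ A * (Ev + Ew) := by
    have h1 : Nv + Nw ≤ 2 * (M₁ * (1 + G₁)) * Ev + 4 * Q * Ew := by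
      linarith only [hNvb, hNwb]
    have h2 : 2 * (M₁ * (1 + G₁)) * Ev + 4 * Q * Ew ≤ A * (Ev + Ew) := by
      have p1 : 0 ≤ (2 * M₁ * (1 + G₁)) * Ew := mul_nonneg hAp1 hEw0
      have p2 : 0 ≤ Q * Ev := mul_nonneg hQ0 hEv0
      rw [hA]
      linarith only [p1, p2, hEv0, hEw0]
    linarith only [h1, h2]
  have hδIL : δ * (aLoss * Ev - (aLoss + (KL:ℝ)) * εL * Nv - CL) ≤ δ * IL :=
    mul_le_mul_of_nonneg_left hLv hδ.le
  -- penalty bounds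
  have hPL : δ * ((aLoss + (KL:ℝ)) * εL) ≤ c₀ / (4 * A) := by
    have h1 : δ * (aLoss + (KL:ℝ)) ≤ DL := by rw [hDL]; linarith
    have h2 : δ * ((aLoss + (KL:ℝ)) * εL) = (δ * (aLoss + (KL:ℝ))) * εL := by ring
    have h3 : (δ * (aLoss + (KL:ℝ))) * εL ≤ DL * εL :=
      mul_le_mul_of_nonneg_right h1 hεL0.le
    have h4 : DL * εL = c₀ / (4 * A) := by
      rw [hεLd, mul_comm, div_mul_cancel₀ _ hDL0.ne']
    linarith
  have hPR : (aReg + (KR:ℝ)) * εR ≤ c₀ / (4 * A) := by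
    have h1 : aReg + (KR:ℝ) ≤ DR := by rw [hDR]; linarith
    have h3 : (aReg + (KR:ℝ)) * εR ≤ DR * εR := mul_le_mul_of_nonneg_right h1 hεR0.le
    have h4 : DR * εR = c₀ / (4 * A) := by
      rw [hεRd, mul_comm, div_mul_cancel₀ _ hDR0.ne']
    linarith
  have hc₀L : c₀ ≤ δ * aLoss := by rw [hc₀]; exact min_le_left _ _
  have hc₀R : c₀ ≤ aReg := by rw [hc₀]; exact min_le_right _ _
  have hAc : (c₀ / A) * (Nv + Nw) ≤ c₀ * (Ev + Ew) := by
    have h1 : (c₀ / A) * (Nv + Nw) ≤ (c₀ / A) * (A * (Ev + Ew)) :=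
      mul_le_mul_of_nonneg_left hsum (div_nonneg hc₀0.le hA0.le)
    have h2 : (c₀ / A) * (A * (Ev + Ew)) = c₀ * (Ev + Ew) := by
      field_simp
    linarith
  have hdiv : c₀ / A = c₀ / (2 * A) + c₀ / (4 * A) + c₀ / (4 * A) := by
    field_simp
    ring
  have hq4 : 0 ≤ c₀ / (4 * A) := div_nonneg hc₀0.le (by linarith)
  -- put everything together
  have e1 : δ * ((aLoss + (KL:ℝ)) * εL * Nv) ≤ (c₀ / (4 * A)) * Nv := by
    have : δ * ((aLoss + (KL:ℝ)) * εL * Nv) = (δ * ((aLoss + (KL:ℝ)) * εL)) * Nv := by ring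
    rw [this]
    exact mul_le_mul_of_nonneg_right hPL hNv0
  have e2 : (aReg + (KR:ℝ)) * εR * Nw ≤ (c₀ / (4 * A)) * Nw := by
    have : (aReg + (KR:ℝ)) * εR * Nw = ((aReg + (KR:ℝ)) * εR) * Nw := by ring
    rw [this]
    exact mul_le_mul_of_nonneg_right hPR hNw0
  have e3 : c₀ * (Ev + Ew) ≤ δ * aLoss * Ev + aReg * Ew := by
    have q1 : c₀ * Ev ≤ (δ * aLoss) * Ev := mul_le_mul_of_nonneg_right hc₀L hEv0
    have q2 : c₀ * Ew ≤ aReg * Ew := mul_le_mul_of_nonneg_right hc₀R hEw0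
    linarith only [q1, q2]
  have e4 : δ * IL ≥ δ * aLoss * Ev - δ * ((aLoss + (KL:ℝ)) * εL * Nv) - δ * CL := by
    have : δ * (aLoss * Ev - (aLoss + (KL:ℝ)) * εL * Nv - CL)
        = δ * aLoss * Ev - δ * ((aLoss + (KL:ℝ)) * εL * Nv) - δ * CL := by ring
    linarith [hδIL, this]
  have e5 : IR ≥ aReg * Ew - (aReg + (KR:ℝ)) * εR * Nw - CR := hRw
  have efin : (c₀ / (2 * A)) * (Nv + Nw)
      ≤ (c₀ / A) * (Nv + Nw) - (c₀ / (4 * A)) * Nv - (c₀ / (4 * A)) * Nw := by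
    have r0 : 0 ≤ Nv + Nw := by linarith only [hNv0, hNw0]
    have r1 : 0 ≤ (c₀ / (4 * A)) * (Nv + Nw) := mul_nonneg hq4 r0
    have r2 : (c₀ / A) * (Nv + Nw)
        = (c₀ / (2 * A)) * (Nv + Nw) + (c₀ / (4 * A)) * (Nv + Nw) + (c₀ / (4 * A)) * (Nv + Nw)
        := by rw [hdiv]; ring
    linarith only [r1, r2]
  linarith only [hAc, e1, e2, e3, e4, e5, efin, hCL0, hCR0, hδ]


end
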